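/- Let ω : A → ℂ be a weight map, and let Z be a mould on A with Z^𝐚 = 0 for every word 𝐚 of length ≠ 1; write Z^{m} for its value on the one-letter word (m). Define the mould Sem := e^Δ(Exp Z) · (Exp I) · (Exp(−Z)). Then for every word 𝐧 = m_1⋯m_r of length r ≥ 0, Sem^𝐧 = Σ_{0 ≤ i < j ≤ r+1} e^{−(ω(m_1)+⋯+ω(m_i))} · [(−1)^{r+1−j} / (i!·(j−i−1)!·(r+1−j)!)] · (Z^{m_1}⋯Z^{m_i}) · (Z^{m_j}⋯Z^{m_r}), where products over empty index ranges equal 1 (in particular Sem^∅ = 1). Specializing Z to the mould Dem supported on non-resonant letters yields the explicit closed formula for the mould Sem of the simplified form of a diffeomorphism. -/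

import Mathlib

/- A mould on an alphabet `A` is a function from words (lists) over `A` to `ℂ`. -/
noncomputable section

abbrev Mould (A : Type*) := List A → ℂ

/-- The unit mould `1^•`: equal to `1` on the empty word and `0` elsewhere. -/
def mone {A : Type*} : Mould A
  | [] => 1
  | _ :: _ => 0

/-- The mould product `(M·N)^𝐚 = Σ_{𝐚¹𝐚²=𝐚} M^{𝐚¹} N^{𝐚²}`. -/
def mprod {A : Type*} (M N : Mould A) : Mould A :=
  fun a => ∑ i ∈ Finset.range (a.length + 1), M (a.take i) * N (a.drop i)

/-- `[M]_{(×n)}`: the `n`-fold mould product of `M` with itself, `[M]_{(×0)} = 1^•`. -/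
def mpow {A : Type*} (M : Mould A) : ℕ → Mould A
  | 0 => mone
  | n + 1 => mprod M (mpow M n)

/-- The mould exponential `Exp M = Σ_{n≥0} [M]_{(×n)}/n!`; on a word `𝐚` the sum is
finite since (for `M^∅ = 0`) the terms with `n > l(𝐚)` vanish. -/
def mExp {A : Type*} (M : Mould A) : Mould A :=
  fun a => ∑ n ∈ Finset.range (a.length + 1), (n.factorial : ℂ)⁻¹ * mpow M n a

/-- The mould logarithm `Log M = Σ_{n≥1} (−1)^{n+1}[M]_{(×n)}/n`; on a word `𝐚` the sum is
finite since (for `M^∅ = 0`) the terms with `n > l(𝐚)` vanish. -/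
def mLog {A : Type*} (M : Mould A) : Mould A :=
  fun a => ∑ n ∈ Finset.Icc 1 a.length, (-1 : ℂ) ^ (n + 1) * (n : ℂ)⁻¹ * mpow M n a

/-- The mould `I^•`: equal to `1` on words of length `1` and `0` elsewhere. -/
def mI {A : Type*} : Mould A
  | [_] => 1
  | _ => 0

/-- Given a weight `ω : A → ℂ` extended additively to words, the operator `e^Δ` on
moulds is `(e^Δ M)^𝐦 = e^{−ω(𝐦)}·M^𝐦`. -/
def eDelta {A : Type*} (ω : A → ℂ) (M : Mould A) : Mould A :=
  fun a => Complex.exp (-(a.map ω).sum) * M a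

lemma mprod_nil' {A : Type*} (M X : Mould A) (hM : ∀ a : List A, a.length ≠ 1 → M a = 0) :
    mprod M X [] = 0 := by
  simp [mprod, hM [] (by simp)]

lemma mprod_cons' {A : Type*} (M X : Mould A) (hM : ∀ a : List A, a.length ≠ 1 → M a = 0)
    (x : A) (t : List A) : mprod M X (x :: t) = M [x] * X t := by
  rw [mprod]
  rw [Finset.sum_eq_single 1]
  · simp
  · intro i hi hne
    rw [hM, zero_mul]
    rw [List.length_take]
    simp only [Finset.mem_range, List.length_cons] at hi ⊢
    omega
  · intro h; simp at h

lemma mpow_eq' {A : Type*} (M : Mould A) (hM : ∀ a : List A, a.length ≠ 1 → M a = 0) :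
    ∀ n (a : List A), mpow M n a = if a.length = n then (a.map fun x => M [x]).prod else 0 := by
  intro n
  induction n with
  | zero => intro a; cases a <;> simp [mpow, mone]
  | succ n ih =>
    intro a
    cases a with
    | nil => simp [mpow, mprod_nil' M _ hM]
    | cons x t =>
      rw [mpow, mprod_cons' M _ hM, ih]
      by_cases h : t.length = n <;> simp [h, mul_comm]

lemma mExp_eq' {A : Type*} (M : Mould A) (hM : ∀ a : List A, a.length ≠ 1 → M a = 0)
    (a : List A) :
    mExp M a = ((a.length.factorial : ℂ))⁻¹ * (a.map fun x => M [x]).prod := by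
  rw [mExp, Finset.sum_eq_single a.length]
  · rw [mpow_eq' M hM]; simp
  · intro n hn hne; rw [mpow_eq' M hM, if_neg (Ne.symm hne), mul_zero]
  · intro h; simp at h

lemma prod_map_neg' {A : Type*} (f : A → ℂ) (w : List A) :
    (w.map fun x => -f x).prod = (-1 : ℂ) ^ w.length * (w.map f).prod := by
  induction w with
  | nil => simp
  | cons x t ih => simp [ih, pow_succ]; ring

lemma prod_map_mI' {A : Type*} (w : List A) :
    (w.map fun x => mI [x]).prod = 1 := by
  induction w with
  | nil => simp
  | cons x t ih => simp [ih, mI]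

/-- Closed formula for the mould `Sem := e^Δ(Exp Z)·(Exp I)·(Exp(−Z))` when `Z`
vanishes on all words of length `≠ 1`:
`Sem^{m_1⋯m_r} = Σ_{0 ≤ i < j ≤ r+1} e^{−(ω(m_1)+⋯+ω(m_i))}·(−1)^{r+1−j}/(i!(j−i−1)!(r+1−j)!)
  ·(Z^{m_1}⋯Z^{m_i})·(Z^{m_j}⋯Z^{m_r})`. -/
theorem Sem_closed_formula {A : Type*} (ω : A → ℂ) (Z : Mould A)
    (hZ : ∀ a : List A, a.length ≠ 1 → Z a = 0) :
    ∀ a : List A,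
      mprod (eDelta ω (mExp Z)) (mprod (mExp mI) (mExp fun b => -Z b)) a =
        ∑ i ∈ Finset.range (a.length + 2), ∑ j ∈ Finset.Ioc i (a.length + 1),
          Complex.exp (-((a.take i).map ω).sum) *
            ((-1 : ℂ) ^ (a.length + 1 - j) /
              ((i.factorial : ℂ) * ((j - i - 1).factorial : ℂ) *
                ((a.length + 1 - j).factorial : ℂ))) *
            ((a.take i).map fun x => Z [x]).prod *
            ((a.drop (j - 1)).map fun x => Z [x]).prod := by
  intro a
  have hZ' : ∀ b : List A, b.length ≠ 1 → (fun b => -Z b) b = 0 := by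
    intro b hb; simp [hZ b hb]
  have hI : ∀ b : List A, b.length ≠ 1 → (mI : Mould A) b = 0 := by
    intro b hb
    match b with
    | [] => rfl
    | [x] => exact absurd rfl hb
    | x :: y :: t => rfl
  set r := a.length with hr
  -- Left-hand side computation
  have LHS : mprod (eDelta ω (mExp Z)) (mprod (mExp mI) (mExp fun b => -Z b)) a =
      ∑ i ∈ Finset.range (r + 1), ∑ k ∈ Finset.range (r - i + 1),
        Complex.exp (-((a.take i).map ω).sum) *
          (((i.factorial : ℂ))⁻¹ * ((a.take i).map fun x => Z [x]).prod) *
          (((k.factorial : ℂ))⁻¹ *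
            ((-1 : ℂ) ^ (r - (i + k)) * (((r - (i + k)).factorial : ℂ))⁻¹ *
              ((a.drop (i + k)).map fun x => Z [x]).prod)) := by
    rw [mprod]
    apply Finset.sum_congr rfl
    intro i hi
    rw [Finset.mem_range] at hi
    have hi' : i ≤ r := by omega
    have hti : (a.take i).length = i := by rw [List.length_take]; omega
    have hdi : (a.drop i).length = r - i := by rw [List.length_drop]
    rw [eDelta, mExp_eq' Z hZ, hti, mprod, hdi, Finset.mul_sum]
    apply Finset.sum_congr rfl
    intro k hk
    rw [Finset.mem_range] at hk
    have htk : ((a.drop i).take k).length = k := by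
      rw [List.length_take, hdi]; omega
    have hdd : (a.drop i).drop k = a.drop (i + k) := by
      rw [List.drop_drop]
    rw [mExp_eq' mI hI, htk, prod_map_mI', mExp_eq' _ hZ', hdd,
      List.length_drop, prod_map_neg', List.length_drop]
    ring
  rw [LHS]
  -- Right-hand side: drop the empty `i = r + 1` term and reindex `j = i + 1 + k`.
  rw [Finset.sum_range_succ (n := r + 1)]
  simp only [Finset.Ioc_self, Finset.sum_empty, add_zero]
  apply Finset.sum_congr rfl
  intro i hi
  rw [Finset.mem_range] at hi
  have hIoc : Finset.Ioc i (r + 1) = Finset.Ico (i + 1) (r + 2) := by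
    rw [← Finset.Ico_add_one_add_one_eq_Ioc]; rfl
  rw [hIoc, Finset.sum_Ico_eq_sum_range]
  have hrange : r + 2 - (i + 1) = r - i + 1 := by omega
  rw [hrange]
  apply Finset.sum_congr rfl
  intro k hk
  rw [Finset.mem_range] at hk
  have e1 : i + 1 + k - i - 1 = k := by omega
  have e2 : i + 1 + k - 1 = i + k := by omega
  have e3 : r + 1 - (i + 1 + k) = r - (i + k) := by omega
  rw [e1, e2, e3, div_eq_mul_inv, mul_inv, mul_inv]
  ring

end
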